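/- Let 𝔽 have characteristic 2, V = 𝔽⁴, W = Λ²V with the identification Λ²(V*) ≅ Λ²V via a fixed isomorphism Λ⁴V ≅ 𝔽 (denote this identification by φ). Define the voltage assignment ℓ on the graph H̃₃(𝔽) (vertices v ⊗ h with h(v) ≠ 0, adjacency f(w) = g(v) = 0) assigning to the dart from v₁ ⊗ h₁ to v₂ ⊗ h₂ the value h₁(v₁)⁻¹ h₂(v₂)⁻¹ (v₁ ∧ v₂)(h₁ ∧ h₂)^φ ∈ S₂(W). Then ℓ is reductive: whenever u₁ ∼ u₂ ⊥ u₃ in H̃₃(𝔽), one has ℓ(u₂, u₃) = ℓ(u₁, u₃). -/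

import Mathlib

open Module

set_option synthInstance.maxHeartbeats 1000000
set_option maxHeartbeats 1000000

/-- The wedge `v ∧ w` as an element of the second exterior power `⋀[𝔽]^2 V`. -/
noncomputable def wedge2 (𝔽 : Type*) {V : Type*} [Field 𝔽] [AddCommGroup V] [Module 𝔽 V]
    (v w : V) : ⋀[𝔽]^2 V :=
  ⟨ExteriorAlgebra.ιMulti 𝔽 2 ![v, w],
   ExteriorAlgebra.ιMulti_range 𝔽 2 (Set.mem_range_self _)⟩

/-- The wedge `v₁ ∧ v₂ ∧ v₃ ∧ v₄` as an element of the fourth exterior power `⋀[𝔽]^4 V`. -/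
noncomputable def wedge4 (𝔽 : Type*) {V : Type*} [Field 𝔽] [AddCommGroup V] [Module 𝔽 V]
    (v₁ v₂ v₃ v₄ : V) : ⋀[𝔽]^4 V :=
  ⟨ExteriorAlgebra.ιMulti 𝔽 4 ![v₁, v₂, v₃, v₄],
   ExteriorAlgebra.ιMulti_range 𝔽 4 (Set.mem_range_self _)⟩

/-- The wedge product `⋀[𝔽]^2 V × ⋀[𝔽]^2 V → ⋀[𝔽]^4 V`. -/
noncomputable def wmul {𝔽 V : Type*} [Field 𝔽] [AddCommGroup V] [Module 𝔽 V]
    (a b : ⋀[𝔽]^2 V) : ⋀[𝔽]^4 V :=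
  ⟨a.1 * b.1, by
    have h : (⋀[𝔽]^4 V) = ⋀[𝔽]^2 V * ⋀[𝔽]^2 V := by
      rw [show (4 : ℕ) = 2 + 2 by norm_num]
      exact pow_add _ 2 2
    exact h ▸ Submodule.mul_mem_mul a.2 b.2⟩

/-- The relation submodule defining the symmetric square. -/
def symRel (𝔽 W : Type*) [Field 𝔽] [AddCommGroup W] [Module 𝔽 W] :
    Submodule 𝔽 (TensorProduct 𝔽 W W) :=
  Submodule.span 𝔽 {x | ∃ v w : W, x = v ⊗ₜ[𝔽] w - w ⊗ₜ[𝔽] v}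

/-- The symmetric square `S₂(W) = (W ⊗ W)/⟨v⊗w − w⊗v⟩`. -/
abbrev SymSq (𝔽 W : Type*) [Field 𝔽] [AddCommGroup W] [Module 𝔽 W] :=
  TensorProduct 𝔽 W W ⧸ symRel 𝔽 W

/-- The symmetric product `vw ∈ S₂(W)`. -/
noncomputable def symMul (𝔽 : Type*) {W : Type*} [Field 𝔽] [AddCommGroup W] [Module 𝔽 W] (v w : W) :
    SymSq 𝔽 W :=
  Submodule.Quotient.mk (v ⊗ₜ[𝔽] w)

/-- The square `w² ∈ S₂(W)`. -/
noncomputable def sqS (𝔽 : Type*) {W : Type*} [Field 𝔽] [AddCommGroup W] [Module 𝔽 W] (w : W) : SymSq 𝔽 W :=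
  symMul 𝔽 w w

/-- The affine non-incident point-hyperplane graph `H̃₃(𝔽)` (for `V = 𝔽⁴`): vertices are pairs
`(v, h)` with `h v ≠ 0` (representing the simple tensor `v ⊗ h`), adjacency is mutual
annihilation. -/
def affPH (𝔽 V : Type*) [Field 𝔽] [AddCommGroup V] [Module 𝔽 V] :
    SimpleGraph {p : V × Module.Dual 𝔽 V // p.2 p.1 ≠ 0} where
  Adj a b := a.1.2 b.1.1 = 0 ∧ b.1.2 a.1.1 = 0
  symm := ⟨fun _ _ h => ⟨h.2, h.1⟩⟩
  loopless := ⟨fun a h => a.2 h.1⟩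

/-- The voltage assignment `ℓ` on `H̃₃(𝔽)`: the dart from `v₁ ⊗ h₁` to `v₂ ⊗ h₂` gets the
voltage `h₁(v₁)⁻¹ h₂(v₂)⁻¹ (v₁ ∧ v₂)(h₁ ∧ h₂)^φ ∈ S₂(Λ²V)`, where `φ` identifies `Λ²(V*)`
with `Λ²V`. -/
noncomputable def volt {𝔽 V : Type*} [Field 𝔽] [AddCommGroup V] [Module 𝔽 V]
    (φ : (⋀[𝔽]^2 (Module.Dual 𝔽 V)) →ₗ[𝔽] ⋀[𝔽]^2 V)
    (a b : {p : V × Module.Dual 𝔽 V // p.2 p.1 ≠ 0}) : SymSq 𝔽 (⋀[𝔽]^2 V) :=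
  ((a.1.2 a.1.1)⁻¹ * (b.1.2 b.1.1)⁻¹) •
    symMul 𝔽 (wedge2 𝔽 a.1.1 b.1.1) (φ (wedge2 𝔽 a.1.2 b.1.2))
/-- the voltage assignment `ℓ` on `H̃₃(𝔽)` (char 𝔽 = 2, `V = 𝔽⁴`) is reductive:
whenever `u₁ ∼ u₂ ⊥ u₃` (where `∼` means equal neighbourhoods), `ℓ(u₂,u₃) = ℓ(u₁,u₃)`. -/

private theorem dual_prop' {𝔽 V : Type*} [Field 𝔽] [AddCommGroup V] [Module 𝔽 V]
    (h g : Module.Dual 𝔽 V) (hle : ∀ x, h x = 0 → g x = 0) : ∃ c : 𝔽, g = c • h := by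
  by_cases hz : ∀ x, h x = 0
  · exact ⟨0, by ext x; simp [hle x (hz x)]⟩
  · push_neg at hz
    obtain ⟨v, hv⟩ := hz
    refine ⟨g v / h v, ?_⟩
    ext x
    have hx : h (x - (h x / h v) • v) = 0 := by
      simp [map_sub, map_smul, smul_eq_mul]
      field_simp
      simp
    have := hle _ hx
    simp only [map_sub, map_smul, smul_eq_mul, sub_eq_zero] at this
    simp [this, smul_eq_mul]
    field_simp

private theorem sep_dual' {𝔽 V : Type*} [Field 𝔽] [AddCommGroup V] [Module 𝔽 V]
    (v w : V) (hw : w ∉ Submodule.span 𝔽 {v}) :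
    ∃ g : Module.Dual 𝔽 V, g v = 0 ∧ g w ≠ 0 := by
  set S := Submodule.span 𝔽 {v}
  have hne : S.mkQ w ≠ 0 := by
    simpa [Submodule.Quotient.mk_eq_zero] using hw
  rw [ne_eq, ← Module.forall_dual_apply_eq_zero_iff 𝔽] at hne
  push_neg at hne
  obtain ⟨f, hf⟩ := hne
  refine ⟨f.comp S.mkQ, ?_, hf⟩
  have : S.mkQ v = 0 := by
    simpa [Submodule.Quotient.mk_eq_zero] using (show v ∈ S from Submodule.mem_span_singleton_self v)
  simp [this]

private theorem wedge2_smul_left' {𝔽 V : Type*} [Field 𝔽] [AddCommGroup V] [Module 𝔽 V]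
    (c : 𝔽) (v w : V) : wedge2 𝔽 (c • v) w = c • wedge2 𝔽 v w := by
  apply Subtype.ext
  show ExteriorAlgebra.ιMulti 𝔽 2 ![c • v, w] = c • ExteriorAlgebra.ιMulti 𝔽 2 ![v, w]
  have h1 : ![c • v, w] = Function.update ![v, w] 0 (c • v) := by
    funext i; fin_cases i <;> simp [Function.update]
  have h2 : ![v, w] = Function.update ![v, w] (0 : Fin 2) v := by
    funext i; fin_cases i <;> simp [Function.update]
  rw [h1, (ExteriorAlgebra.ιMulti 𝔽 2).map_update_smul, ← h2]

private theorem wedge2_smul_right' {𝔽 V : Type*} [Field 𝔽] [AddCommGroup V] [Module 𝔽 V]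
    (c : 𝔽) (v w : V) : wedge2 𝔽 v (c • w) = c • wedge2 𝔽 v w := by
  apply Subtype.ext
  show ExteriorAlgebra.ιMulti 𝔽 2 ![v, c • w] = c • ExteriorAlgebra.ιMulti 𝔽 2 ![v, w]
  have h1 : ![v, c • w] = Function.update ![v, w] 1 (c • w) := by
    funext i; fin_cases i <;> simp [Function.update]
  have h2 : ![v, w] = Function.update ![v, w] (1 : Fin 2) w := by
    funext i; fin_cases i <;> simp [Function.update]
  rw [h1, (ExteriorAlgebra.ιMulti 𝔽 2).map_update_smul, ← h2]

private theorem symMul_smul_left' {𝔽 W : Type*} [Field 𝔽] [AddCommGroup W] [Module 𝔽 W]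
    (c : 𝔽) (v w : W) : symMul 𝔽 (c • v) w = c • symMul 𝔽 v w := by
  unfold symMul
  rw [← TensorProduct.smul_tmul', Submodule.Quotient.mk_smul]

private theorem symMul_smul_right' {𝔽 W : Type*} [Field 𝔽] [AddCommGroup W] [Module 𝔽 W]
    (c : 𝔽) (v w : W) : symMul 𝔽 v (c • w) = c • symMul 𝔽 v w := by
  unfold symMul
  rw [TensorProduct.tmul_smul, Submodule.Quotient.mk_smul]

theorem volt_reductive {𝔽 : Type*} [Field 𝔽] [CharP 𝔽 2]
    (φ : (⋀[𝔽]^2 (Module.Dual 𝔽 (Fin 4 → 𝔽))) →ₗ[𝔽] ⋀[𝔽]^2 (Fin 4 → 𝔽))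
    (u₁ u₂ u₃ : {p : (Fin 4 → 𝔽) × Module.Dual 𝔽 (Fin 4 → 𝔽) // p.2 p.1 ≠ 0})
    (hsim : (affPH 𝔽 (Fin 4 → 𝔽)).neighborSet u₁ = (affPH 𝔽 (Fin 4 → 𝔽)).neighborSet u₂)
    (hadj : (affPH 𝔽 (Fin 4 → 𝔽)).Adj u₂ u₃) :
    volt φ u₂ u₃ = volt φ u₁ u₃ := by
  obtain ⟨⟨v₁, h₁⟩, hu₁⟩ := u₁
  obtain ⟨⟨v₂, h₂⟩, hu₂⟩ := u₂
  obtain ⟨⟨v₃, h₃⟩, hu₃⟩ := u₃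
  simp only [ne_eq] at hu₁ hu₂ hu₃
  have hiff : ∀ b, (affPH 𝔽 (Fin 4 → 𝔽)).Adj ⟨(v₁, h₁), hu₁⟩ b ↔
      (affPH 𝔽 (Fin 4 → 𝔽)).Adj ⟨(v₂, h₂), hu₂⟩ b := fun b =>
    Set.ext_iff.mp hsim b
  -- kernels of h₁ and h₂ agree
  have key : ∀ (w : Fin 4 → 𝔽) (g : Module.Dual 𝔽 (Fin 4 → 𝔽)), g w ≠ 0 →
      h₁ w = 0 → g v₁ = 0 → h₂ w = 0 ∧ g v₂ = 0 := by
    intro w g hgw hw hg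
    have := (hiff ⟨(w, g), hgw⟩).mp ⟨hw, hg⟩
    exact this
  have hker : ∀ w, h₁ w = 0 → h₂ w = 0 := by
    intro w hw
    by_cases hsp : w ∈ Submodule.span 𝔽 {v₁}
    · obtain ⟨c, rfl⟩ := Submodule.mem_span_singleton.mp hsp
      have : c = 0 := by
        by_contra hc
        exact hu₁ (by
          have := hw
          rw [map_smul, smul_eq_mul] at this
          exact (mul_eq_zero.mp this).resolve_left hc)
      simp [this]
    · obtain ⟨g, hg1, hg2⟩ := sep_dual' v₁ w hsp
      exact (key w g hg2 hw hg1).1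
  -- h₂ = β • h₁
  obtain ⟨β, hβ⟩ := dual_prop' h₁ h₂ hker
  have hβ0 : β ≠ 0 := by
    rintro rfl
    simp at hβ
    rw [hβ] at hu₂
    simp at hu₂
  -- v₂ = α • v₁
  have hv2 : v₂ ∈ Submodule.span 𝔽 {v₁} := by
    by_contra hsp
    obtain ⟨g, hg1, hg2⟩ := sep_dual' v₁ v₂ hsp
    -- need w with h₁ w = 0 and g w ≠ 0
    have hwex : ∃ w, h₁ w = 0 ∧ g w ≠ 0 := by
      by_contra hno
      push_neg at hno
      obtain ⟨c, hc⟩ := dual_prop' h₁ g hno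
      have : c = 0 := by
        have := hg1
        rw [hc] at this
        simp only [LinearMap.smul_apply, smul_eq_mul] at this
        exact (mul_eq_zero.mp this).resolve_right hu₁
      rw [this] at hc
      simp [hc] at hg2
    obtain ⟨w, hw1, hw2⟩ := hwex
    exact hg2 (key w g hw2 hw1 hg1).2
  obtain ⟨α, rfl⟩ := Submodule.mem_span_singleton.mp hv2
  have hα0 : α ≠ 0 := by
    rintro rfl
    simp at hu₂
  -- now compute
  subst hβ
  unfold volt
  simp only
  rw [wedge2_smul_left', wedge2_smul_left' (V := Module.Dual 𝔽 (Fin 4 → 𝔽))]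
  simp only [map_smul, LinearMap.smul_apply, smul_eq_mul]
  rw [symMul_smul_left', symMul_smul_right', smul_smul, smul_smul]
  congr 1
  have h11 : h₁ v₁ ≠ 0 := hu₁
  have h33 : h₃ v₃ ≠ 0 := hu₃
  field_simp
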